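/- Let η be a character of Γ with η|_Λ = ξ. Let W(η) be the r-dimensional ℂ-vector space with basis (f_i)_{i ∈ ℤ/rℤ}, and define ρ(h)·f_i = η(h)·χ₁(h)^i·f_i for h ∈ Γ and X·f_i = f_{i+1} (indices modulo r, so X·f_{r−1} = f₀). Then (W(η), ρ, X) is a B(ξ)-representation, and it is irreducible. -/

import Mathlib

noncomputable section

/-- `(V, ρ, X)` is a `B(ξ)`-representation: `ρ` is a group homomorphism (recorded via
multiplicativity and unitality), `ρ(h)∘X = χ₁(h)·(X∘ρ(h))` for all `h`, `X^r = id`,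
and `ρ(g) = ξ(g)·id` for all `g ∈ Λ`. -/
def IsBRep {Γ : Type*} [CommGroup Γ] (χ₁ : Γ →* ℂˣ) (Λ : Subgroup Γ) (ξ : ↥Λ →* ℂˣ)
    (r : ℕ) {V : Type*} [AddCommGroup V] [Module ℂ V]
    (ρ : Γ → Module.End ℂ V) (X : Module.End ℂ V) : Prop :=
  (∀ a b : Γ, ρ (a * b) = ρ a * ρ b) ∧ ρ 1 = 1 ∧
  (∀ h : Γ, ρ h * X = (χ₁ h : ℂ) • (X * ρ h)) ∧
  X ^ r = 1 ∧
  ∀ g : Λ, ρ (g : Γ) = (ξ g : ℂ) • (1 : Module.End ℂ V)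

/-- A subspace `W` is stable under `X` and all `ρ(h)`. -/
def BStable {Γ : Type*} {V : Type*} [AddCommGroup V] [Module ℂ V]
    (ρ : Γ → Module.End ℂ V) (X : Module.End ℂ V) (W : Submodule ℂ V) : Prop :=
  (∀ v ∈ W, X v ∈ W) ∧ ∀ h : Γ, ∀ v ∈ W, ρ h v ∈ W

/-- Irreducibility: `V ≠ 0` and the only stable subspaces are `0` and `V`. -/
def BIrred {Γ : Type*} {V : Type*} [AddCommGroup V] [Module ℂ V]
    (ρ : Γ → Module.End ℂ V) (X : Module.End ℂ V) : Prop :=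
  (∃ v : V, v ≠ 0) ∧ ∀ W : Submodule ℂ V, BStable ρ X W → W = ⊥ ∨ W = ⊤

/-- The action of `h ∈ Γ` on `W(η)`, with `ρ(h)·f_i = η(h)·χ₁(h)^i·f_i` on the basis
`(f_i)_{i ∈ ℤ/rℤ}` of `ℤ/rℤ → ℂ`. -/
def wRho (r : ℕ) {Γ : Type*} [CommGroup Γ] (χ₁ η : Γ →* ℂˣ) (h : Γ) :
    Module.End ℂ (ZMod r → ℂ) where
  toFun v := fun i => (η h : ℂ) * (χ₁ h : ℂ) ^ i.val * v i
  map_add' v w := by funext i; simp [mul_add]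
  map_smul' a v := by funext i; simp [smul_eq_mul]; ring

/-- The operator `X` on `W(η)`, with `X·f_i = f_{i+1}` (indices modulo `r`). -/
def wX (r : ℕ) : Module.End ℂ (ZMod r → ℂ) where
  toFun v := fun i => v (i - 1)
  map_add' v w := rfl
  map_smul' a v := rfl


lemma sum_char_eq_zero {Γ : Type*} [CommGroup Γ] [Fintype Γ] (χ : Γ →* ℂˣ) (hχne : χ ≠ 1) :
    ∑ h : Γ, (χ h : ℂ) = 0 := by
  obtain ⟨g, hg⟩ : ∃ g, χ g ≠ 1 := by
    by_contra h
    push_neg at h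
    exact hχne (MonoidHom.ext fun g => h g)
  have h1 : ∑ h : Γ, (χ g : ℂ) * (χ h : ℂ) = ∑ h : Γ, (χ h : ℂ) :=
    Fintype.sum_bijective (g * ·) (Group.mulLeft_bijective g) _ _ (fun x => by
      rw [map_mul, Units.val_mul])
  rw [← Finset.mul_sum] at h1
  have hg' : (χ g : ℂ) ≠ 1 := fun h => hg (Units.ext h)
  have := sub_eq_zero.mpr h1
  rw [← sub_one_mul] at this
  rcases mul_eq_zero.mp this with h | h
  · exact absurd (sub_eq_zero.mp h) hg'
  · exact h

lemma pow_mod_eq {x : ℂ} {r : ℕ} (hx : x ^ r = 1) (m : ℕ) : x ^ (m % r) = x ^ m := by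
  conv_rhs => rw [← Nat.mod_add_div m r]
  rw [pow_add, pow_mul, hx, one_pow, mul_one]

lemma pow_val_add {r : ℕ} [NeZero r] {x : ℂ} (hx : x ^ r = 1) (a b : ZMod r) :
    x ^ (a + b).val = x ^ a.val * x ^ b.val := by
  rw [ZMod.val_add, pow_mod_eq hx, pow_add]

lemma wX_pow (r n : ℕ) : ∀ (v : ZMod r → ℂ) (i : ZMod r), ((wX r ^ n) v) i = v (i - n) := by
  induction n with
  | zero => intro v i; simp
  | succ n ih =>
    intro v i
    rw [pow_succ']
    have : ((wX r * wX r ^ n) v) i = ((wX r ^ n) v) (i - 1) := rfl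
    rw [this, ih]
    push_cast
    ring_nf

/-- Case (II), Lemma "basic", construction: for a character `η` of `Γ` restricting to `ξ`
on `Λ`, the data `(W(η), ρ, X)` is a `B(ξ)`-representation, and it is irreducible. -/
theorem W_is_irreducible_BRep {Γ : Type*} [CommGroup Γ] [Fintype Γ] (r : ℕ) (hr : 1 < r)
    (χ₁ : Γ →* ℂˣ) (hχ : orderOf χ₁ = r)
    (Λ : Subgroup Γ) (hΛ : ∀ g ∈ Λ, χ₁ g = 1)
    (ξ : ↥Λ →* ℂˣ) (η : Γ →* ℂˣ) (hη : ∀ g : Λ, η (g : Γ) = ξ g) :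
    IsBRep χ₁ Λ ξ r (wRho r χ₁ η) (wX r) ∧ BIrred (wRho r χ₁ η) (wX r) := by
  haveI : NeZero r := ⟨by omega⟩
  haveI : Fact (1 < r) := ⟨hr⟩
  have hχr : χ₁ ^ r = 1 := hχ ▸ pow_orderOf_eq_one χ₁
  have hxr : ∀ h : Γ, (χ₁ h : ℂ) ^ r = 1 := fun h => by
    have : (χ₁ ^ r) h = (1 : Γ →* ℂˣ) h := by rw [hχr]
    simp only [MonoidHom.pow_apply, MonoidHom.one_apply] at this
    rw [← Units.val_pow_eq_pow_val, this, Units.val_one]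
  constructor
  · refine ⟨?_, ?_, ?_, ?_, ?_⟩
    · intro a b
      apply LinearMap.ext; intro v; funext i
      show (η (a*b) : ℂ) * (χ₁ (a*b) : ℂ) ^ i.val * v i
        = (η a : ℂ) * (χ₁ a : ℂ) ^ i.val * ((η b : ℂ) * (χ₁ b : ℂ) ^ i.val * v i)
      rw [map_mul, map_mul, Units.val_mul, Units.val_mul, mul_pow]
      ring
    · apply LinearMap.ext; intro v; funext i
      show (η 1 : ℂ) * (χ₁ 1 : ℂ) ^ i.val * v i = v i
      simp
    · intro h
      apply LinearMap.ext; intro v; funext j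
      show (η h : ℂ) * (χ₁ h : ℂ) ^ j.val * v (j - 1)
        = (χ₁ h : ℂ) * ((η h : ℂ) * (χ₁ h : ℂ) ^ (j-1).val * v (j - 1))
      have key : (χ₁ h : ℂ) ^ j.val = (χ₁ h : ℂ) ^ (j - 1).val * (χ₁ h : ℂ) := by
        conv_lhs => rw [← sub_add_cancel j 1]
        rw [pow_val_add (hxr h), ZMod.val_one, pow_one]
      rw [key]; ring
    · apply LinearMap.ext; intro v; funext i
      show ((wX r ^ r) v) i = v i
      rw [wX_pow, ZMod.natCast_self, sub_zero]
    · intro g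
      apply LinearMap.ext; intro v; funext i
      show (η (g : Γ) : ℂ) * (χ₁ (g : Γ) : ℂ) ^ i.val * v i = (ξ g : ℂ) * v i
      rw [hΛ g g.2, hη g, Units.val_one, one_pow, mul_one]
  · constructor
    · refine ⟨fun _ => 1, fun h => ?_⟩
      have := congrFun h 0
      simp at this
    · intro W hW
      by_cases hbot : W = ⊥
      · exact Or.inl hbot
      right
      obtain ⟨v, hvW, hv⟩ := Submodule.exists_mem_ne_zero_of_ne_bot hbot
      obtain ⟨i, hvi⟩ : ∃ i, v i ≠ 0 := Function.ne_iff.mp hv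
      -- projection onto the i-th coordinate
      set e : ZMod r → (ZMod r → ℂ) := fun i => fun j => if i = j then 1 else 0 with he
      set c : ℂ := (Fintype.card Γ : ℂ) * v i with hc
      have hcne : c ≠ 0 := mul_ne_zero (Nat.cast_ne_zero.mpr Fintype.card_ne_zero) hvi
      have hwW : (∑ h : Γ, (((η h * χ₁ h ^ i.val)⁻¹ : ℂˣ) : ℂ) • (wRho r χ₁ η h) v) ∈ W :=
        Submodule.sum_mem W fun h _ => Submodule.smul_mem W _ (hW.2 h v hvW)
      have hwe : (∑ h : Γ, (((η h * χ₁ h ^ i.val)⁻¹ : ℂˣ) : ℂ) • (wRho r χ₁ η h) v) = c • e i := by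
        funext j
        rw [Finset.sum_apply]
        have hterm : ∀ h : Γ, ((((η h * χ₁ h ^ i.val)⁻¹ : ℂˣ) : ℂ) • (wRho r χ₁ η h) v) j
            = (((χ₁ ^ j.val * (χ₁ ^ i.val)⁻¹ : Γ →* ℂˣ) h : ℂ)) * v j := by
          intro h
          show (((η h * χ₁ h ^ i.val)⁻¹ : ℂˣ) : ℂ) * ((η h : ℂ) * (χ₁ h : ℂ) ^ j.val * v j) = _
          simp only [MonoidHom.mul_apply, MonoidHom.inv_apply, MonoidHom.pow_apply,
            Units.val_mul, Units.val_inv_eq_inv_val, Units.val_pow_eq_pow_val]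
          have h1 : (η h : ℂ) ≠ 0 := Units.ne_zero _
          have h2 : (χ₁ h : ℂ) ≠ 0 := Units.ne_zero _
          field_simp
        rw [Finset.sum_congr rfl (fun h _ => hterm h), ← Finset.sum_mul]
        by_cases hji : j = i
        · subst hji
          have : (χ₁ ^ j.val * (χ₁ ^ j.val)⁻¹ : Γ →* ℂˣ) = 1 := by ext g; simp
          rw [this]
          simp [he, hc]
        · have hne : (χ₁ ^ j.val * (χ₁ ^ i.val)⁻¹ : Γ →* ℂˣ) ≠ 1 := by
            intro hone
            have hone2 : χ₁ ^ j.val = χ₁ ^ i.val := mul_inv_eq_one.mp hone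
            have key : ∀ m k : ℕ, m < k → k < r → χ₁ ^ k ≠ χ₁ ^ m := by
              intro m k hmk hkr heq
              have hd : χ₁ ^ (k - m) * χ₁ ^ m = χ₁ ^ m := by
                refine MonoidHom.ext fun g => ?_
                have hg := congrArg (fun f : Γ →* ℂˣ => f g) heq
                simp only [MonoidHom.mul_apply, MonoidHom.pow_apply] at hg ⊢
                rw [← pow_add, Nat.sub_add_cancel hmk.le, hg]
              have hd1 : χ₁ ^ (k - m) = 1 := (mul_eq_right (M := Γ →* ℂˣ)).mp hd
              have hdvd : orderOf χ₁ ∣ k - m := orderOf_dvd_of_pow_eq_one hd1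
              rw [hχ] at hdvd
              have := Nat.le_of_dvd (by omega) hdvd
              omega
            have hvne : j.val ≠ i.val := fun h => hji (ZMod.val_injective r h)
            rcases lt_or_gt_of_ne hvne with hlt | hlt
            · exact key j.val i.val hlt (ZMod.val_lt i) hone2.symm
            · exact key i.val j.val hlt (ZMod.val_lt j) hone2
          rw [sum_char_eq_zero _ hne, zero_mul]
          simp [he, Ne.symm hji]
      have heiW : e i ∈ W := by
        have : e i = c⁻¹ • (c • e i) := by rw [smul_smul, inv_mul_cancel₀ hcne, one_smul]
        rw [this, ← hwe]
        exact Submodule.smul_mem W _ hwW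
      have hXpow : ∀ (n : ℕ) (u : ZMod r → ℂ), u ∈ W → (wX r ^ n) u ∈ W := by
        intro n
        induction n with
        | zero => intro u hu; simpa using hu
        | succ n ih =>
          intro u hu
          rw [pow_succ]
          exact ih _ (hW.1 u hu)
      have hejW : ∀ j : ZMod r, e j ∈ W := by
        intro j
        have : e j = (wX r ^ (j - i).val) (e i) := by
          funext m
          rw [wX_pow]
          rw [ZMod.natCast_rightInverse (j - i)]
          show (if j = m then (1:ℂ) else 0) = if i = m - (j - i) then 1 else 0
          congr 1
          rw [eq_sub_iff_add_eq, eq_iff_iff]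
          constructor
          · intro h; rw [← h]; ring
          · intro h; rw [← h]; ring_nf
        rw [this]
        exact hXpow _ _ heiW
      rw [Submodule.eq_top_iff']
      intro u
      rw [pi_eq_sum_univ u]
      exact Submodule.sum_mem W fun j _ => Submodule.smul_mem W _ (hejW j)
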